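/- Ptolemy inequalities: for any points a,b,c,e ∈ ℍ one has Δ₁ ≤ 0, Δ₂ ≤ 0 and Δ₃ ≤ 0, where Δ₁ := S_ac·S_be − S_ae·S_bc − S_ab·S_ce, Δ₂ := S_ab·S_ce − S_ac·S_be − S_ae·S_bc, Δ₃ := S_ae·S_bc − S_ac·S_be − S_ab·S_ce. -/

import Mathlib

open Real Finset

noncomputable section

/-- Points of `ℝ³`. -/
abbrev V3 : Type := Fin 3 → ℝ

/-- The pseudo-Euclidean scalar product `⟨x,y⟩ = x₀y₀ − x₁y₁ − x₂y₂`. -/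
def pscal (x y : V3) : ℝ := x 0 * y 0 - x 1 * y 1 - x 2 * y 2

/-- The hyperboloid model `ℍ` of the hyperbolic plane. -/
def Hyp : Set V3 := {x | pscal x x = 1 ∧ 0 < x 0}

/-- Inverse hyperbolic cosine. -/
def arcoshR (x : ℝ) : ℝ := Real.log (x + Real.sqrt (x ^ 2 - 1))

/-- Hyperbolic distance `d(a,b) = arcosh ⟨a,b⟩`. -/
def dH (a b : V3) : ℝ := arcoshR (pscal a b)

/-- Determinant of the 3×3 matrix with columns `a`, `b`, `c`. -/
def det3 (a b c : V3) : ℝ :=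
  a 0 * (b 1 * c 2 - b 2 * c 1) - b 0 * (a 1 * c 2 - a 2 * c 1) + c 0 * (a 1 * b 2 - a 2 * b 1)

/-- `S_ab = sinh(d(a,b)/2)`. -/
def SS (a b : V3) : ℝ := Real.sinh (dH a b / 2)

/-- Signed area of the triangle `a b c`. -/
def triArea (a b c : V3) : ℝ :=
  2 * Real.arctan (det3 a b c / (pscal a b + pscal b c + pscal c a + 1))

/-- Signed area of the `n`-gon with vertices `z 1, …, z n`. -/
def polyArea (n : ℕ) (z : ℕ → V3) : ℝ :=
  ∑ k ∈ Finset.Ico 2 n, triArea (z 1) (z k) (z (k + 1))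

/-- Cyclic successor on `{1, …, n}`. -/
def nxt (n k : ℕ) : ℕ := k % n + 1

/-- Oriented convexity of the `n`-gon `z 1, …, z n`. -/
def OrientedConvex (n : ℕ) (z : ℕ → V3) : Prop :=
  ∀ k ∈ Finset.Icc 1 n, ∀ j ∈ Finset.Icc 1 n,
    j ≠ k → j ≠ nxt n k → 0 < det3 (z k) (z (nxt n k)) (z j)

/-- A set of points lies in a common 2-dimensional linear subspace of `ℝ³`. -/
def Collin (s : Set V3) : Prop :=
  ∃ W : Submodule ℝ V3, Module.finrank ℝ W = 2 ∧ ∀ x ∈ s, x ∈ W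

/-- A set of points lies in a common affine plane of `ℝ³` not containing the origin. -/
def Cocyc (s : Set V3) : Prop :=
  ∃ u : V3, ∃ p : ℝ, u ≠ 0 ∧ p ≠ 0 ∧ ∀ x ∈ s, pscal u x = p


/-- Poincaré disk projection. -/
def toDisk (x : V3) : EuclideanSpace ℝ (Fin 2) := WithLp.toLp 2 ![x 1 / (1 + x 0), x 2 / (1 + x 0)]

lemma pscal_ge_one {a b : V3} (ha : a ∈ Hyp) (hb : b ∈ Hyp) : 1 ≤ pscal a b := by
  obtain ⟨ha1, ha0⟩ := ha; obtain ⟨hb1, hb0⟩ := hb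
  unfold pscal at *
  nlinarith [sq_nonneg (a 1 - b 1), sq_nonneg (a 2 - b 2), sq_nonneg (a 1 * b 2 - a 2 * b 1),
    mul_pos ha0 hb0, sq_nonneg (a 0 * b 0 + 1 + a 1 * b 1 + a 2 * b 2)]

lemma cosh_arcoshR {x : ℝ} (hx : 1 ≤ x) : Real.cosh (arcoshR x) = x := by
  have hs : Real.sqrt (x ^ 2 - 1) ^ 2 = x ^ 2 - 1 := Real.sq_sqrt (by nlinarith)
  have hsn : 0 ≤ Real.sqrt (x ^ 2 - 1) := Real.sqrt_nonneg _
  have hy : 0 < x + Real.sqrt (x ^ 2 - 1) := by nlinarith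
  rw [arcoshR, Real.cosh_eq, Real.exp_log hy, Real.exp_neg, Real.exp_log hy]
  rw [div_eq_iff (by norm_num : (2:ℝ) ≠ 0)]
  have hy' : x + Real.sqrt (x ^ 2 - 1) ≠ 0 := ne_of_gt hy
  field_simp
  nlinarith [hs]

lemma arcoshR_nonneg {x : ℝ} (hx : 1 ≤ x) : 0 ≤ arcoshR x := by
  have hsn : 0 ≤ Real.sqrt (x ^ 2 - 1) := Real.sqrt_nonneg _
  have : (1:ℝ) ≤ x + Real.sqrt (x ^ 2 - 1) := by linarith
  exact Real.log_nonneg this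

lemma SS_eq_sqrt {a b : V3} (ha : a ∈ Hyp) (hb : b ∈ Hyp) :
    SS a b = Real.sqrt ((pscal a b - 1) / 2) := by
  have h1 : 1 ≤ pscal a b := pscal_ge_one ha hb
  have hd : 0 ≤ dH a b := arcoshR_nonneg h1
  have hc : Real.cosh (dH a b) = pscal a b := cosh_arcoshR h1
  have hsq : Real.sinh (dH a b / 2) ^ 2 = (pscal a b - 1) / 2 := by
    have := Real.cosh_sq (dH a b / 2)
    have h2 := Real.cosh_two_mul (dH a b / 2)
    have h3 : (2 : ℝ) * (dH a b / 2) = dH a b := by ring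
    rw [h3, hc] at h2
    nlinarith
  have hpos : 0 ≤ Real.sinh (dH a b / 2) := Real.sinh_nonneg_iff.2 (by linarith)
  rw [SS, ← Real.sqrt_sq hpos, hsq]

lemma SS_comm (a b : V3) : SS a b = SS b a := by
  unfold SS dH arcoshR pscal; ring_nf

lemma SS_eq_dist {a b : V3} (ha : a ∈ Hyp) (hb : b ∈ Hyp) :
    SS a b = dist (toDisk a) (toDisk b) *
      (Real.sqrt ((1 + a 0) / 2) * Real.sqrt ((1 + b 0) / 2)) := by
  obtain ⟨ha1, ha0⟩ := ha; obtain ⟨hb1, hb0⟩ := hb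
  have hA : (0:ℝ) < 1 + a 0 := by linarith
  have hB : (0:ℝ) < 1 + b 0 := by linarith
  rw [SS_eq_sqrt ⟨ha1, ha0⟩ ⟨hb1, hb0⟩, EuclideanSpace.dist_eq]
  rw [← Real.sqrt_mul (by positivity), ← Real.sqrt_mul (by positivity)]
  congr 1
  simp only [Fin.sum_univ_two, Real.dist_eq, sq_abs, toDisk, PiLp.toLp_apply, Matrix.cons_val_zero,
    Matrix.cons_val_one, Matrix.head_cons]
  unfold pscal at *
  field_simp
  linear_combination ((1+b 0)^2) * ha1 + ((1+a 0)^2) * hb1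

lemma ptolemy_SS {a b c e : V3} (ha : a ∈ Hyp) (hb : b ∈ Hyp) (hc : c ∈ Hyp) (he : e ∈ Hyp) :
    SS a c * SS b e ≤ SS a b * SS c e + SS b c * SS a e := by
  have key := EuclideanGeometry.mul_dist_le_mul_dist_add_mul_dist
    (toDisk a) (toDisk b) (toDisk c) (toDisk e)
  rw [SS_eq_dist ha hc, SS_eq_dist hb he, SS_eq_dist ha hb, SS_eq_dist hc he,
    SS_eq_dist hb hc, SS_eq_dist ha he]
  have hA := Real.sqrt_nonneg ((1 + a 0) / 2)
  have hB := Real.sqrt_nonneg ((1 + b 0) / 2)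
  have hC := Real.sqrt_nonneg ((1 + c 0) / 2)
  have hE := Real.sqrt_nonneg ((1 + e 0) / 2)
  have hH : 0 ≤ Real.sqrt ((1 + a 0) / 2) * Real.sqrt ((1 + b 0) / 2) *
      (Real.sqrt ((1 + c 0) / 2) * Real.sqrt ((1 + e 0) / 2)) := by positivity
  nlinarith [mul_le_mul_of_nonneg_left key hH, dist_nonneg (x := toDisk a) (y := toDisk b),
    dist_nonneg (x := toDisk c) (y := toDisk e), dist_nonneg (x := toDisk b) (y := toDisk c),
    dist_nonneg (x := toDisk a) (y := toDisk e)]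

/-- Corollary 3.5 (Ptolemy inequalities): for any four points of `ℍ` the three Ptolemy
expressions are nonpositive. -/
theorem ptolemy_inequalities (a b c e : V3)
    (ha : a ∈ Hyp) (hb : b ∈ Hyp) (hc : c ∈ Hyp) (he : e ∈ Hyp) :
    SS a c * SS b e - SS a e * SS b c - SS a b * SS c e ≤ 0 ∧
    SS a b * SS c e - SS a c * SS b e - SS a e * SS b c ≤ 0 ∧
    SS a e * SS b c - SS a c * SS b e - SS a b * SS c e ≤ 0 := by
  have h1 := ptolemy_SS ha hb hc he
  have h2 := ptolemy_SS ha hc hb he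
  have h3 := ptolemy_SS ha hb he hc
  rw [SS_comm c b] at h2
  rw [SS_comm e c] at h3
  refine ⟨by linarith, by linarith, by linarith⟩
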